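/- For every nonnegative integer n and real parameters α, β > -1, the shifted Jacobi polynomial R_n^{(α,β)}(x) expands in Hermite polynomials as R_n^{(α,β)}(x) = Σ_{j=0}^{n} C_{n,j} H_j(x), where C_{n,j} = ((-1)^n (-1)^j (β+1)_n (n+α+β+1)_j / ((n-j)! 2^j j! (β+1)_j)) · Σ_{s=0}^{⌊(n-j)/2⌋} [((j-n)/2)_s ((j+1-n)/2)_s ((j+n+α+β+1)/2)_s ((j+n+α+β+2)/2)_s / (((j+β+1)/2)_s ((j+β+2)/2)_s)] · 1/s!. -/

import Mathlib

open Finset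

/-- Pochhammer (rising factorial) symbol on the reals. -/
noncomputable def poch (a : ℝ) (n : ℕ) : ℝ := ∏ i ∈ Finset.range n, (a + i)

/-- Physicists' Hermite polynomial. -/
noncomputable def hermiteP (N : ℕ) (x : ℝ) : ℝ :=
  (N.factorial : ℝ) * ∑ k ∈ Finset.range (N / 2 + 1),
    (-1 : ℝ) ^ k * (2 * x) ^ (N - 2 * k) / ((k.factorial : ℝ) * ((N - 2 * k).factorial : ℝ))

/-- Shifted Jacobi polynomial. -/
noncomputable def shiftedJacobi (α β : ℝ) (n : ℕ) (x : ℝ) : ℝ :=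
  ((-1 : ℝ) ^ n * poch (β + 1) n / (n.factorial : ℝ)) *
    ∑ s ∈ Finset.range (n + 1),
      poch (-(n : ℝ)) s * poch ((n : ℝ) + α + β + 1) s * x ^ s /
        (poch (β + 1) s * (s.factorial : ℝ))

lemma poch_zero (a : ℝ) : poch a 0 = 1 := by simp [poch]

lemma poch_succ (a : ℝ) (n : ℕ) : poch a (n+1) = poch a n * (a + n) := by
  simp [poch, Finset.prod_range_succ]

lemma poch_pos {a : ℝ} (ha : 0 < a) (n : ℕ) : 0 < poch a n := by
  apply Finset.prod_pos
  intro i _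
  positivity

lemma poch_add (a : ℝ) (m k : ℕ) : poch a (m + k) = poch a m * poch (a + m) k := by
  induction k with
  | zero => simp [poch_zero]
  | succ k ih =>
    rw [← Nat.add_assoc, poch_succ, ih, poch_succ]
    push_cast
    ring

lemma poch_dup (a : ℝ) (k : ℕ) :
    poch a (2*k) = 4^k * poch (a/2) k * poch ((a+1)/2) k := by
  induction k with
  | zero => simp [poch_zero]
  | succ k ih =>
    have h : 2 * (k+1) = 2*k + 1 + 1 := by ring
    rw [h, poch_succ, poch_succ, ih, poch_succ, poch_succ]
    push_cast
    ring

lemma poch_neg_nat' (n : ℕ) : ∀ j : ℕ, j ≤ n →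
    poch (-(n:ℝ)) j * ((n-j).factorial : ℝ) = (-1)^j * (n.factorial : ℝ) := by
  intro j
  induction j with
  | zero => simp [poch_zero]
  | succ j ih =>
    intro hj
    have hj' : j ≤ n := le_of_lt (Nat.lt_of_succ_le hj)
    have h1 : n - j = (n - (j+1)) + 1 := by omega
    have h2 : ((n - j).factorial : ℝ) = ((n - j : ℕ) : ℝ) * ((n - (j+1)).factorial : ℝ) := by
      rw [h1, Nat.factorial_succ]
      push_cast
      ring
    have h3 : (-(n:ℝ) + j) = -(((n - j : ℕ) : ℝ)) := by
      push_cast [Nat.cast_sub hj']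
      ring
    have key := ih hj'
    rw [h2] at key
    rw [poch_succ, h3]
    calc poch (-(n:ℝ)) j * -((n-j:ℕ):ℝ) * ((n-(j+1)).factorial : ℝ)
        = -(poch (-(n:ℝ)) j * (((n-j:ℕ):ℝ) * ((n-(j+1)).factorial : ℝ))) := by ring
      _ = -((-1)^j * (n.factorial : ℝ)) := by rw [key]
      _ = (-1)^(j+1) * (n.factorial : ℝ) := by ring

lemma poch_neg_nat (n : ℕ) {j : ℕ} (hj : j ≤ n) :
    poch (-(n:ℝ)) j = (-1)^j * (n.factorial : ℝ) / ((n-j).factorial : ℝ) := by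
  have h := poch_neg_nat' n j hj
  have hnz : ((n - j).factorial : ℝ) ≠ 0 := Nat.cast_ne_zero.mpr (Nat.factorial_ne_zero _)
  field_simp [← h]
  exact h

lemma alt_sum (r : ℕ) :
    ∑ l ∈ range (r+1), (-1:ℝ)^l / ((l.factorial : ℝ) * ((r-l).factorial : ℝ)) =
      if r = 0 then 1 else 0 := by
  have key : ∀ l ∈ range (r+1), (-1:ℝ)^l / ((l.factorial : ℝ) * ((r-l).factorial : ℝ)) =
      ((-1:ℝ)^l * (r.choose l : ℝ)) / (r.factorial : ℝ) := by
    intro l hl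
    have hl' : l ≤ r := Nat.lt_succ_iff.mp (mem_range.mp hl)
    have h := Nat.choose_mul_factorial_mul_factorial hl'
    have h2 : ((r.choose l : ℕ) : ℝ) * ((l.factorial : ℝ) * ((r-l).factorial : ℝ)) = (r.factorial : ℝ) := by
      push_cast [← h]
      ring
    have hnz1 : ((l.factorial : ℝ)) ≠ 0 := Nat.cast_ne_zero.mpr (Nat.factorial_ne_zero _)
    have hnz2 : (((r-l).factorial : ℝ)) ≠ 0 := Nat.cast_ne_zero.mpr (Nat.factorial_ne_zero _)
    have hnz3 : ((r.factorial : ℝ)) ≠ 0 := Nat.cast_ne_zero.mpr (Nat.factorial_ne_zero _)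
    field_simp
    rw [← h2]
    ring
  rw [Finset.sum_congr rfl key, ← Finset.sum_div]
  have := Int.alternating_sum_range_choose (n := r)
  have hr : ∑ l ∈ range (r+1), ((-1:ℝ)^l * (r.choose l : ℝ)) = if r = 0 then 1 else 0 := by
    exact_mod_cast congrArg (Int.cast : ℤ → ℝ) this
  rw [hr]
  by_cases h : r = 0 <;> simp [h]

lemma inv_hermite (m : ℕ) (x : ℝ) :
    x ^ m = ∑ k ∈ range (m/2 + 1),
      (m.factorial : ℝ) / (2^m * ((k.factorial : ℝ) * ((m - 2*k).factorial : ℝ))) *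
        hermiteP (m - 2*k) x := by
  have expand : ∀ k ∈ range (m/2+1),
      (m.factorial : ℝ) / (2^m * ((k.factorial : ℝ) * ((m - 2*k).factorial : ℝ))) *
        hermiteP (m - 2*k) x
      = ∑ l ∈ range ((m-2*k)/2 + 1),
          (m.factorial : ℝ) / 2^m * ((-1:ℝ)^l * (2*x)^(m - 2*k - 2*l) /
            ((k.factorial : ℝ) * ((l.factorial : ℝ) * ((m - 2*k - 2*l).factorial : ℝ)))) := by
    intro k hk
    rw [hermiteP, Finset.mul_sum, Finset.mul_sum]
    apply Finset.sum_congr rfl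
    intro l hl
    have hnz : (((m-2*k).factorial : ℝ)) ≠ 0 := Nat.cast_ne_zero.mpr (Nat.factorial_ne_zero _)
    have hnz2 : ((k.factorial : ℝ)) ≠ 0 := Nat.cast_ne_zero.mpr (Nat.factorial_ne_zero _)
    have hnz3 : ((l.factorial : ℝ)) ≠ 0 := Nat.cast_ne_zero.mpr (Nat.factorial_ne_zero _)
    have hnz4 : (((m-2*k-2*l).factorial : ℝ)) ≠ 0 := Nat.cast_ne_zero.mpr (Nat.factorial_ne_zero _)
    field_simp
  rw [Finset.sum_congr rfl expand]
  rw [Finset.sum_sigma']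
  rw [Finset.sum_nbij' (i := fun p => (⟨p.1 + p.2, p.2⟩ : Σ _ : ℕ, ℕ))
      (j := fun p => (⟨p.1 - p.2, p.2⟩ : Σ _ : ℕ, ℕ))
      (t := (range (m/2+1)).sigma (fun r => range (r+1)))
      (g := fun p => (m.factorial : ℝ) / 2^m * ((-1:ℝ)^p.2 * (2*x)^(m - 2*p.1) /
            (((p.1 - p.2).factorial : ℝ) * ((p.2.factorial : ℝ) * ((m - 2*p.1).factorial : ℝ)))))]
  · rw [Finset.sum_sigma]
    have inner : ∀ r ∈ range (m/2+1),
        (∑ l ∈ range (r+1), (m.factorial : ℝ) / 2^m * ((-1:ℝ)^l * (2*x)^(m - 2*r) /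
            (((r - l).factorial : ℝ) * ((l.factorial : ℝ) * ((m - 2*r).factorial : ℝ)))))
        = (if r = 0 then 1 else 0) * ((m.factorial : ℝ) / 2^m * ((2*x)^(m-2*r) / ((m-2*r).factorial : ℝ))) := by
      intro r hr
      have : ∀ l ∈ range (r+1), (m.factorial : ℝ) / 2^m * ((-1:ℝ)^l * (2*x)^(m - 2*r) /
            (((r - l).factorial : ℝ) * ((l.factorial : ℝ) * ((m - 2*r).factorial : ℝ))))
          = ((-1:ℝ)^l / ((l.factorial : ℝ) * ((r-l).factorial : ℝ))) *
            ((m.factorial : ℝ) / 2^m * ((2*x)^(m-2*r) / ((m-2*r).factorial : ℝ))) := by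
        intro l hl
        ring
      rw [Finset.sum_congr rfl this, ← Finset.sum_mul, alt_sum]
    rw [Finset.sum_congr rfl inner]
    rw [Finset.sum_eq_single_of_mem 0 (by simp)]
    · simp [Nat.factorial]
      field_simp
      rw [mul_pow]
      ring
    · intro r _ hr
      simp [hr]
  · intro p hp
    simp only [Finset.mem_sigma, Finset.mem_range] at hp ⊢
    omega
  · intro p hp
    simp only [Finset.mem_sigma, Finset.mem_range] at hp ⊢
    omega
  · intro p hp
    simp only [Finset.mem_sigma, Finset.mem_range] at hp
    ext <;> simp <;> omega
  · intro p hp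
    simp only [Finset.mem_sigma, Finset.mem_range] at hp
    ext <;> simp <;> omega
  · intro p hp
    simp only [Finset.mem_sigma, Finset.mem_range] at hp
    have h1 : p.1 + p.2 - p.2 = p.1 := by omega
    have h2 : m - 2*(p.1+p.2) = m - 2*p.1 - 2*p.2 := by omega
    simp [h1, h2]

lemma key_term (α β : ℝ) (hβ : β > -1) (n j k : ℕ) (h : j + 2*k ≤ n) (x : ℝ) :
    ((-1:ℝ)^n * poch (β+1) n / (n.factorial:ℝ)) *
      (poch (-(n:ℝ)) (j+2*k) * poch ((n:ℝ)+α+β+1) (j+2*k) *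
        (((j+2*k).factorial:ℝ)/(2^(j+2*k) * ((k.factorial:ℝ) * (j.factorial:ℝ))) * hermiteP j x) /
        (poch (β+1) (j+2*k) * ((j+2*k).factorial:ℝ)))
    = ((-1:ℝ)^n * (-1:ℝ)^j * poch (β+1) n * poch ((n:ℝ)+α+β+1) j /
        (((n-j).factorial:ℝ) * 2^j * (j.factorial:ℝ) * poch (β+1) j)) *
      ((poch (((j:ℝ)-n)/2) k * poch (((j:ℝ)+1-n)/2) k * poch (((j:ℝ)+n+α+β+1)/2) k *
          poch (((j:ℝ)+n+α+β+2)/2) k /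
        (poch (((j:ℝ)+β+1)/2) k * poch (((j:ℝ)+β+2)/2) k)) * 1 / (k.factorial:ℝ)) *
      hermiteP j x := by
  have hjn : j ≤ n := by omega
  rw [poch_add (-(n:ℝ)) j (2*k), poch_add ((n:ℝ)+α+β+1) j (2*k), poch_add (β+1) j (2*k)]
  rw [poch_dup (-(n:ℝ)+j), poch_dup ((n:ℝ)+α+β+1+j), poch_dup (β+1+j)]
  rw [poch_neg_nat n hjn]
  have e1 : (-(n:ℝ)+j)/2 = ((j:ℝ)-n)/2 := by ring
  have e2 : (-(n:ℝ)+j+1)/2 = ((j:ℝ)+1-n)/2 := by ring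
  have e3 : ((n:ℝ)+α+β+1+j)/2 = ((j:ℝ)+n+α+β+1)/2 := by ring
  have e4 : ((n:ℝ)+α+β+1+j+1)/2 = ((j:ℝ)+n+α+β+2)/2 := by ring
  have e5 : (β+1+(j:ℝ))/2 = ((j:ℝ)+β+1)/2 := by ring
  have e6 : (β+1+(j:ℝ)+1)/2 = ((j:ℝ)+β+2)/2 := by ring
  rw [e1, e2, e3, e4, e5, e6]
  have hpow : (2:ℝ)^(j+2*k) = 2^j * 4^k := by
    rw [pow_add, pow_mul]
    norm_num
  rw [hpow]
  have hb1 : (0:ℝ) < β + 1 := by linarith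
  have hj0 : (0:ℝ) ≤ (j:ℝ) := Nat.cast_nonneg j
  have hb2 : (0:ℝ) < ((j:ℝ)+β+1)/2 := by linarith
  have hb3 : (0:ℝ) < ((j:ℝ)+β+2)/2 := by linarith
  have p1 : poch (β+1) j ≠ 0 := ne_of_gt (poch_pos hb1 j)
  have p2 : poch (((j:ℝ)+β+1)/2) k ≠ 0 := ne_of_gt (poch_pos hb2 k)
  have p3 : poch (((j:ℝ)+β+2)/2) k ≠ 0 := ne_of_gt (poch_pos hb3 k)
  have f1 : ((n.factorial:ℝ)) ≠ 0 := Nat.cast_ne_zero.mpr (Nat.factorial_ne_zero _)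
  have f2 : (((n-j).factorial:ℝ)) ≠ 0 := Nat.cast_ne_zero.mpr (Nat.factorial_ne_zero _)
  have f3 : ((j.factorial:ℝ)) ≠ 0 := Nat.cast_ne_zero.mpr (Nat.factorial_ne_zero _)
  have f4 : ((k.factorial:ℝ)) ≠ 0 := Nat.cast_ne_zero.mpr (Nat.factorial_ne_zero _)
  have f5 : (((j+2*k).factorial:ℝ)) ≠ 0 := Nat.cast_ne_zero.mpr (Nat.factorial_ne_zero _)
  have g1 : (2:ℝ)^j ≠ 0 := by positivity
  have g2 : (4:ℝ)^k ≠ 0 := by positivity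
  field_simp

/-- Connection formula for shifted Jacobi polynomials in series of Hermite polynomials. -/
theorem shiftedJacobi_in_hermite (α β : ℝ) (hα : α > -1) (hβ : β > -1) (n : ℕ) (x : ℝ) :
    shiftedJacobi α β n x =
      ∑ j ∈ Finset.range (n + 1),
        ((-1 : ℝ) ^ n * (-1 : ℝ) ^ j * poch (β + 1) n * poch ((n : ℝ) + α + β + 1) j /
          (((n - j).factorial : ℝ) * 2 ^ j * (j.factorial : ℝ) * poch (β + 1) j)) *
          (∑ s ∈ Finset.range ((n - j) / 2 + 1),
            (poch (((j : ℝ) - n) / 2) s * poch (((j : ℝ) + 1 - n) / 2) s *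
              poch (((j : ℝ) + n + α + β + 1) / 2) s * poch (((j : ℝ) + n + α + β + 2) / 2) s /
              (poch (((j : ℝ) + β + 1) / 2) s * poch (((j : ℝ) + β + 2) / 2) s)) *
            (1 : ℝ) / (s.factorial : ℝ)) *
          hermiteP j x := by
  have LHS_eq : shiftedJacobi α β n x =
      ∑ s ∈ range (n+1), ∑ k ∈ range (s/2+1),
        ((-1:ℝ)^n * poch (β+1) n / (n.factorial:ℝ)) *
          (poch (-(n:ℝ)) s * poch ((n:ℝ)+α+β+1) s *
            (((s.factorial:ℝ)/(2^s * ((k.factorial:ℝ) * ((s-2*k).factorial:ℝ))) *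
              hermiteP (s-2*k) x)) /
            (poch (β+1) s * (s.factorial:ℝ))) := by
    rw [shiftedJacobi, Finset.mul_sum]
    apply Finset.sum_congr rfl
    intro s hs
    rw [inv_hermite s x, Finset.mul_sum, Finset.sum_div, Finset.mul_sum]
  have RHS_eq : ∀ j ∈ range (n+1),
      ((-1 : ℝ) ^ n * (-1 : ℝ) ^ j * poch (β + 1) n * poch ((n : ℝ) + α + β + 1) j /
          (((n - j).factorial : ℝ) * 2 ^ j * (j.factorial : ℝ) * poch (β + 1) j)) *
          (∑ s ∈ Finset.range ((n - j) / 2 + 1),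
            (poch (((j : ℝ) - n) / 2) s * poch (((j : ℝ) + 1 - n) / 2) s *
              poch (((j : ℝ) + n + α + β + 1) / 2) s * poch (((j : ℝ) + n + α + β + 2) / 2) s /
              (poch (((j : ℝ) + β + 1) / 2) s * poch (((j : ℝ) + β + 2) / 2) s)) *
            (1 : ℝ) / (s.factorial : ℝ)) *
          hermiteP j x
      = ∑ k ∈ range ((n-j)/2 + 1),
          ((-1 : ℝ) ^ n * (-1 : ℝ) ^ j * poch (β + 1) n * poch ((n : ℝ) + α + β + 1) j /
            (((n - j).factorial : ℝ) * 2 ^ j * (j.factorial : ℝ) * poch (β + 1) j)) *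
          ((poch (((j : ℝ) - n) / 2) k * poch (((j : ℝ) + 1 - n) / 2) k *
              poch (((j : ℝ) + n + α + β + 1) / 2) k * poch (((j : ℝ) + n + α + β + 2) / 2) k /
              (poch (((j : ℝ) + β + 1) / 2) k * poch (((j : ℝ) + β + 2) / 2) k)) *
            (1 : ℝ) / (k.factorial : ℝ)) *
          hermiteP j x := by
    intro j hj
    rw [Finset.mul_sum, Finset.sum_mul]
  rw [LHS_eq, Finset.sum_congr rfl RHS_eq]
  rw [Finset.sum_sigma', Finset.sum_sigma']
  apply Finset.sum_nbij' (i := fun p => (⟨p.1 - 2*p.2, p.2⟩ : Σ _ : ℕ, ℕ))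
      (j := fun p => (⟨p.1 + 2*p.2, p.2⟩ : Σ _ : ℕ, ℕ))
  · intro p hp
    simp only [Finset.mem_sigma, Finset.mem_range] at hp ⊢
    omega
  · intro p hp
    simp only [Finset.mem_sigma, Finset.mem_range] at hp ⊢
    omega
  · intro p hp
    simp only [Finset.mem_sigma, Finset.mem_range] at hp
    ext <;> simp <;> omega
  · intro p hp
    simp only [Finset.mem_sigma, Finset.mem_range] at hp
    ext <;> simp <;> omega
  · rintro ⟨s, k⟩ hp
    simp only [Finset.mem_sigma, Finset.mem_range] at hp
    obtain ⟨hs, hk⟩ := hp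
    have h2k : 2*k ≤ s := by omega
    obtain ⟨j, rfl⟩ : ∃ j, s = j + 2*k := ⟨s - 2*k, by omega⟩
    have hjj : j + 2*k - 2*k = j := by omega
    simp only [hjj]
    exact key_term α β hβ n j k (by omega) x
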